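/- Let n ≥ 2 and let a₁, …, aₙ be real numbers. Let M be the n×n symmetric tridiagonal matrix with diagonal entries a₁, …, aₙ, with all entries on the first super- and sub-diagonal equal to 1, and zeros elsewhere. If det M = 1 or det M = -1, then there exists an index i with |aᵢ| < 2. -/

import Mathlib

private def triT (b : ℕ → ℝ) (m : ℕ) : Matrix (Fin m) (Fin m) ℝ :=
  Matrix.of fun i j =>
    if (i : ℕ) = (j : ℕ) then b i
    else if (i : ℕ) + 1 = (j : ℕ) ∨ (j : ℕ) + 1 = (i : ℕ) then 1 else 0

private def triD (b : ℕ → ℝ) : ℕ → ℝ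
  | 0 => 1
  | 1 => b 0
  | (m + 2) => b (m + 1) * triD b (m + 1) - triD b m

private lemma subN_det (b : ℕ → ℝ) (m : ℕ) :
    ((triT b (m + 2)).submatrix (Fin.last (m + 1)).succAbove
      (⟨m, by omega⟩ : Fin (m + 2)).succAbove).det = (triT b m).det := by
  set N := (triT b (m + 2)).submatrix (Fin.last (m + 1)).succAbove
      (⟨m, by omega⟩ : Fin (m + 2)).succAbove with hN
  have hNentry : ∀ i j : Fin (m + 1), N i j =
      if ((i : ℕ) = (if (j : ℕ) < m then (j : ℕ) else (j : ℕ) + 1)) then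
        b i
      else if (i : ℕ) + 1 = (if (j : ℕ) < m then (j : ℕ) else (j : ℕ) + 1) ∨
          (if (j : ℕ) < m then (j : ℕ) else (j : ℕ) + 1) + 1 = (i : ℕ) then 1 else 0 := by
    intro i j
    have hrow : ((Fin.last (m + 1)).succAbove i : ℕ) = (i : ℕ) := by
      simp [Fin.succAbove_last]
    have hcol : (((⟨m, by omega⟩ : Fin (m + 2)).succAbove j : ℕ)) =
        (if (j : ℕ) < m then (j : ℕ) else (j : ℕ) + 1) := by
      rcases lt_or_ge (j : ℕ) m with hj | hj
      · rw [Fin.succAbove_of_castSucc_lt _ _ (by simp [Fin.lt_def, hj])]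
        simp [hj]
      · rw [Fin.succAbove_of_le_castSucc _ _ (by simp [Fin.le_def, hj])]
        rw [if_neg (by omega)]
        simp [Fin.val_succ]
    rw [hN]
    simp only [Matrix.submatrix_apply, triT, Matrix.of_apply, hrow, hcol]
  rw [Matrix.det_succ_column N (Fin.last m)]
  have hz : ∀ i : Fin (m + 1), i ≠ Fin.last m →
      (-1 : ℝ) ^ ((i : ℕ) + ((Fin.last m : Fin (m+1)) : ℕ)) * N i (Fin.last m) *
        (N.submatrix i.succAbove (Fin.last m).succAbove).det = 0 := by
    intro i hi
    have hiv : (i : ℕ) ≠ m := fun hc => hi (Fin.ext hc)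
    have hlt : (i : ℕ) < m + 1 := i.isLt
    rw [hNentry]
    simp only [Fin.val_last]
    rw [if_neg (lt_irrefl m)]
    rw [if_neg (by omega), if_neg (by omega)]
    ring
  rw [Finset.sum_eq_single (Fin.last m)]
  · have h1 : N (Fin.last m) (Fin.last m) = 1 := by
      rw [hNentry]; simp only [Fin.val_last]
      rw [if_neg (lt_irrefl m), if_neg (by omega), if_pos (by omega)]
    rw [h1]
    have hsub : N.submatrix (Fin.last m).succAbove (Fin.last m).succAbove = triT b m := by
      ext i j
      rw [Matrix.submatrix_apply, hNentry]
      have hri : ((Fin.last m).succAbove i : ℕ) = (i : ℕ) := by simp [Fin.succAbove_last]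
      have hrj : ((Fin.last m).succAbove j : ℕ) = (j : ℕ) := by simp [Fin.succAbove_last]
      rw [hri, hrj, if_pos (j.isLt)]
      rfl
    rw [hsub]
    simp only [Fin.val_last]
    rw [show (m + m : ℕ) = 2 * m by ring, pow_mul]
    norm_num
  · intro i _ hi
    exact hz i hi
  · intro hmem
    exact absurd (Finset.mem_univ _) hmem

private lemma triT_rec (b : ℕ → ℝ) (m : ℕ) :
    (triT b (m + 2)).det = b (m + 1) * (triT b (m + 1)).det - (triT b m).det := by
  set A := triT b (m + 2) with hA
  rw [Matrix.det_succ_row A (Fin.last (m + 1))]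
  set j1 : Fin (m + 2) := Fin.last (m + 1) with hj1
  set j2 : Fin (m + 2) := ⟨m, by omega⟩ with hj2
  have hAe : ∀ j : Fin (m + 2), A (Fin.last (m + 1)) j =
      if (m + 1 : ℕ) = (j : ℕ) then b (m + 1)
      else if (m + 1 : ℕ) + 1 = (j : ℕ) ∨ (j : ℕ) + 1 = m + 1 then 1 else 0 := by
    intro j; rfl
  have hz : ∀ j : Fin (m + 2), j ≠ j1 → j ≠ j2 →
      (-1 : ℝ) ^ (((Fin.last (m + 1) : Fin (m + 2)) : ℕ) + (j : ℕ)) *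
        A (Fin.last (m + 1)) j *
        (A.submatrix (Fin.last (m + 1)).succAbove j.succAbove).det = 0 := by
    intro j hne1 hne2
    have h1 : (j : ℕ) ≠ m + 1 := fun hc => hne1 (Fin.ext (by simpa [hj1] using hc))
    have h2 : (j : ℕ) ≠ m := fun hc => hne2 (Fin.ext (by simpa using hc))
    have hlt : (j : ℕ) < m + 2 := j.isLt
    rw [hAe, if_neg (by omega), if_neg (by omega)]
    ring
  have hne : j1 ≠ j2 := by
    intro hc
    have : (m + 1 : ℕ) = m := by simpa [hj1, hj2, Fin.ext_iff] using hc
    omega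
  rw [show (Finset.univ : Finset (Fin (m + 2))).sum _ =
      (({j1, j2} : Finset (Fin (m + 2)))).sum
        (fun j => (-1 : ℝ) ^ (((Fin.last (m + 1) : Fin (m + 2)) : ℕ) + (j : ℕ)) *
          A (Fin.last (m + 1)) j *
          (A.submatrix (Fin.last (m + 1)).succAbove j.succAbove).det) from
    (Finset.sum_subset (Finset.subset_univ _) (fun j _ hj => by
      simp only [Finset.mem_insert, Finset.mem_singleton, not_or] at hj
      exact hz j hj.1 hj.2)).symm]
  rw [Finset.sum_pair hne]
  have hsub1 : A.submatrix (Fin.last (m + 1)).succAbove j1.succAbove = triT b (m + 1) := by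
    ext i j
    simp [hA, hj1, triT, Fin.succAbove_last, Matrix.submatrix_apply]
  have hsub2 := subN_det b m
  have ht1 : A (Fin.last (m + 1)) j1 = b (m + 1) := by
    rw [hAe]; simp [hj1]
  have ht2 : A (Fin.last (m + 1)) j2 = 1 := by
    rw [hAe, show ((j2 : Fin (m + 2)) : ℕ) = m from rfl,
      if_neg (by omega), if_pos (by omega)]
  rw [ht1, ht2, hsub1, hsub2]
  show (-1 : ℝ) ^ (m + 1 + (m + 1)) * b (m + 1) * (triT b (m + 1)).det +
      (-1 : ℝ) ^ (m + 1 + m) * 1 * (triT b m).det =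
      b (m + 1) * (triT b (m + 1)).det - (triT b m).det
  have e1 : (-1 : ℝ) ^ (m + 1 + (m + 1)) = 1 := by
    rw [show m + 1 + (m + 1) = 2 * (m + 1) by ring, pow_mul]; norm_num
  have e2 : (-1 : ℝ) ^ (m + 1 + m) = -1 := by
    rw [show m + 1 + m = 2 * m + 1 by ring, pow_succ, pow_mul]; norm_num
  rw [e1, e2]
  ring

private lemma triT_det (b : ℕ → ℝ) (m : ℕ) : (triT b m).det = triD b m := by
  induction m using Nat.strong_induction_on with
  | _ m ih =>
    match m with
    | 0 => simp [triD, Matrix.det_fin_zero]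
    | 1 =>
      rw [show (triT b 1).det = triT b 1 0 0 from Matrix.det_fin_one _]
      simp [triT, triD]
    | (k + 2) =>
      rw [triT_rec, ih (k + 1) (by omega), ih k (by omega)]
      rfl

private lemma triD_grow (b : ℕ → ℝ) (hb : ∀ i, 2 ≤ |b i|) (m : ℕ) :
    |triD b m| + 1 ≤ |triD b (m + 1)| := by
  induction m with
  | zero => simp [triD]; linarith [hb 0]
  | succ k ih =>
    have h2 : 2 ≤ |b (k + 1)| := hb (k + 1)
    have h0 : (0:ℝ) ≤ |triD b (k+1)| := abs_nonneg _
    calc |triD b (k + 1)| + 1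
        ≤ 2 * |triD b (k + 1)| - |triD b k| := by linarith
      _ ≤ |b (k + 1)| * |triD b (k + 1)| - |triD b k| := by nlinarith
      _ = |b (k + 1) * triD b (k + 1)| - |triD b k| := by rw [abs_mul]
      _ ≤ |b (k + 1) * triD b (k + 1) - triD b k| := by
          have := abs_sub_abs_le_abs_sub (b (k + 1) * triD b (k + 1)) (triD b k)
          linarith
      _ = |triD b (k + 2)| := by rfl

/-- a tridiagonal real matrix with 1's on the off-diagonals and
determinant ±1 has some diagonal entry of absolute value < 2. -/
theorem tridiagonal_det_pm_one_exists_small_diag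
    (n : ℕ) (hn : 2 ≤ n) (a : Fin n → ℝ)
    (M : Matrix (Fin n) (Fin n) ℝ)
    (hM : ∀ i j : Fin n, M i j =
      if i = j then a i
      else if i.val + 1 = j.val ∨ j.val + 1 = i.val then 1 else 0)
    (hdet : M.det = 1 ∨ M.det = -1) :
    ∃ i : Fin n, |a i| < 2 := by
  by_contra h
  push_neg at h
  set b : ℕ → ℝ := fun i => if hi : i < n then a ⟨i, hi⟩ else 2 with hbdef
  have hb : ∀ i, 2 ≤ |b i| := by
    intro i
    by_cases hi : i < n
    · simpa [hbdef, hi] using h ⟨i, hi⟩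
    · simp [hbdef, hi]
  have hMT : M = triT b n := by
    ext i j
    rw [hM i j]
    simp only [triT, Matrix.of_apply, hbdef, Fin.is_lt, dif_pos, Fin.ext_iff]
  have hgrow : ∀ m : ℕ, (m : ℝ) + 1 ≤ |triD b m| := by
    intro m
    induction m with
    | zero => simp [triD]
    | succ k ih =>
      have := triD_grow b hb k
      push_cast
      linarith
  have h3 : (3:ℝ) ≤ |M.det| := by
    rw [hMT, triT_det]
    have h1 := hgrow n
    have h2 : (2:ℝ) ≤ (n:ℝ) := by exact_mod_cast hn
    linarith
  rcases hdet with h1 | h1 <;> rw [h1] at h3 <;> norm_num at h3
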